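/- Let M be a nontrivial graph matroid family with rank function r, dimensionality d, and threshold t. Then for every n ≥ t, r(K_n) = d·(n − t) + r(K_t). -/

import Mathlib

/-!
Common framework: graph matroid families.

A finite simple graph (without isolated vertices) is identified with its edge
set: a finite set of non-diagonal elements of `Sym2 ℕ`.  A graph matroid
family is encoded, following the paper, as a finitary matroid on the edge set
of the countable complete graph on `ℕ` that is invariant under all
permutations of `ℕ`.
-/

/-- The set of vertices covered by a set of edges. -/
def eSupp (E : Set (Sym2 ℕ)) : Set ℕ := {v : ℕ | ∃ e ∈ E, v ∈ e}

/-- The edge set of the complete graph on the vertex set `V`. -/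
def clique (V : Set ℕ) : Set (Sym2 ℕ) := {e : Sym2 ℕ | ¬ e.IsDiag ∧ ∀ v ∈ e, v ∈ V}

/-- The edge set of the complete graph `K_n` on the vertices `0, …, n-1`. -/
def cliqueN (n : ℕ) : Set (Sym2 ℕ) := clique {v : ℕ | v < n}

/-- `E` is (the edge set of) a finite simple graph. -/
def IsGraph (E : Set (Sym2 ℕ)) : Prop := E.Finite ∧ ∀ e ∈ E, ¬ e.IsDiag

/-- The degree of the vertex `v` in the edge set `E`. -/
noncomputable def deg (E : Set (Sym2 ℕ)) (v : ℕ) : ℕ := {e ∈ E | v ∈ e}.ncard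

/-- The minimum degree of (the graph with) edge set `E` (whose vertex set is `eSupp E`). -/
noncomputable def minDeg (E : Set (Sym2 ℕ)) : ℕ := sInf {k : ℕ | ∃ v ∈ eSupp E, deg E v = k}

/-- Deleting a set `S` of vertices from the graph with edge set `E`. -/
def deleteVerts (E : Set (Sym2 ℕ)) (S : Set ℕ) : Set (Sym2 ℕ) := {e ∈ E | ∀ v ∈ e, v ∉ S}

/-- The graph with edge set `E` is `k`-connected: it has more than `k` vertices and
deleting any set of fewer than `k` vertices leaves a connected graph. -/
def KConnected (k : ℕ) (E : Set (Sym2 ℕ)) : Prop :=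
  k < (eSupp E).ncard ∧
  ∀ S : Finset ℕ, S.card < k →
    ((SimpleGraph.fromEdgeSet E).induce (eSupp E \ ↑S)).Connected

/-- `E` is a forest. -/
def IsForest (E : Set (Sym2 ℕ)) : Prop := (SimpleGraph.fromEdgeSet E).IsAcyclic

/-- `E` is a matching: no two distinct edges of `E` share a vertex. -/
def IsMatching (E : Set (Sym2 ℕ)) : Prop :=
  ∀ e ∈ E, ∀ f ∈ E, e ≠ f → ∀ v : ℕ, v ∈ e → v ∉ f

/-- `E` is a star `K_{1,m}` with `m` edges. -/
def IsStar (m : ℕ) (E : Set (Sym2 ℕ)) : Prop :=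
  ∃ (c : ℕ) (L : Finset ℕ), c ∉ L ∧ L.card = m ∧ E = (fun x => s(c, x)) '' ↑L

/-- `C` is a cycle graph `C_n` for some `n ≥ 3`. -/
def IsCycleGraph (C : Set (Sym2 ℕ)) : Prop :=
  ∃ n : ℕ, 3 ≤ n ∧ ∃ f : ZMod n → ℕ, Function.Injective f ∧
    C = {e : Sym2 ℕ | ∃ i : ZMod n, e = s(f i, f (i + 1))}

/-- The rank of the set `X` in the matroid `M₀`: the supremum of the cardinalities of
independent subsets of `X` (as a natural number; all sets we use are finite). -/
noncomputable def mrk (M₀ : Matroid (Sym2 ℕ)) (X : Set (Sym2 ℕ)) : ℕ :=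
  sSup {n : ℕ | ∃ I ⊆ X, M₀.Indep I ∧ I.ncard = n}

/-- A vertical `k`-separation of the matroid `M₀`. -/
def VerticalSep (M₀ : Matroid (Sym2 ℕ)) (k : ℕ) (E₁ E₂ : Set (Sym2 ℕ)) : Prop :=
  Disjoint E₁ E₂ ∧ E₁ ∪ E₂ = M₀.E ∧
  k ≤ mrk M₀ E₁ ∧ k ≤ mrk M₀ E₂ ∧
  mrk M₀ E₁ + mrk M₀ E₂ + 1 ≤ mrk M₀ M₀.E + k

/-- The matroid `M₀` is vertically `k`-connected. -/
def VerticallyConnected (M₀ : Matroid (Sym2 ℕ)) (k : ℕ) : Prop :=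
  k ≤ mrk M₀ M₀.E ∧
  ∀ k' : ℕ, 0 < k' → k' < k → ∀ E₁ E₂ : Set (Sym2 ℕ), ¬ VerticalSep M₀ k' E₁ E₂

/-- A `d`-dimensional abstract rigidity matroid on the complete graph with vertex set `V`. -/
def IsARM (d : ℕ) (V : Set ℕ) (M₀ : Matroid (Sym2 ℕ)) : Prop :=
  M₀.E = clique V ∧
  (∀ E₁ E₂ : Set (Sym2 ℕ), E₁ ⊆ clique V → E₂ ⊆ clique V →
      (eSupp E₁ ∩ eSupp E₂).ncard < d →
      M₀.closure (E₁ ∪ E₂) = M₀.closure E₁ ∪ M₀.closure E₂) ∧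
  (∀ E₁ E₂ : Set (Sym2 ℕ), E₁ ⊆ clique V → E₂ ⊆ clique V →
      d ≤ (eSupp E₁ ∩ eSupp E₂).ncard →
      M₀.closure E₁ = clique (eSupp E₁) → M₀.closure E₂ = clique (eSupp E₂) →
      M₀.closure (E₁ ∪ E₂) = clique (eSupp E₁ ∪ eSupp E₂))

/-- The `d`-dimensional edge split operation: replace an edge `uv` of `G` by a new
vertex `w` joined to `u` and `v`, as well as to `d - 1` other vertices of `G`. -/
def EdgeSplit (d : ℕ) (G G' : Set (Sym2 ℕ)) : Prop :=
  ∃ (u v w : ℕ) (X : Finset ℕ),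
    s(u, v) ∈ G ∧ w ∉ eSupp G ∧ ↑X ⊆ eSupp G ∧ X.card = d - 1 ∧ u ∉ X ∧ v ∉ X ∧
    G' = (G \ {s(u, v)}) ∪ {s(w, u), s(w, v)} ∪ ((fun x => s(w, x)) '' ↑X)

/-- A graph matroid family: a finitary matroid on the edge set of the countable
complete graph on `ℕ`, invariant under all permutations of `ℕ`. -/
structure GraphMatroidFamily where
  /-- The underlying matroid on the edge set of `K_ℕ`. -/
  M : Matroid (Sym2 ℕ)
  ground_eq : M.E = {e : Sym2 ℕ | ¬ e.IsDiag}
  finitary : M.Finitary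
  invariant : ∀ σ : Equiv.Perm ℕ, ∀ I : Set (Sym2 ℕ),
    M.Indep I → M.Indep (Sym2.map σ '' I)

namespace GraphMatroidFamily

variable (M : GraphMatroidFamily)

/-- The rank function of the family: `M.rk E` is the rank of the matroid `M(G)` for
any graph `G` whose edge set contains `E`. -/
noncomputable def rk (E : Set (Sym2 ℕ)) : ℕ := mrk M.M E

/-- A set of edges (a graph) is `M`-independent. -/
def Indep (E : Set (Sym2 ℕ)) : Prop := M.M.Indep E

/-- `C` is an `M`-circuit: a graph that is not `M`-independent, but such that deleting
any single edge from it yields an `M`-independent graph. -/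
def IsCircuit (C : Set (Sym2 ℕ)) : Prop :=
  IsGraph C ∧ ¬ M.Indep C ∧ ∀ e ∈ C, M.Indep (C \ {e})

/-- The graph with edge set `E` is `M`-rigid. -/
def Rigid (E : Set (Sym2 ℕ)) : Prop := M.rk E = M.rk (clique (eSupp E))

/-- The graph with vertex set `V` and edge set `E` is `M`-rigid. -/
def RigidOn (V : Set ℕ) (E : Set (Sym2 ℕ)) : Prop := M.rk E = M.rk (clique V)

/-- `M` is trivial if every (finite, simple) graph is `M`-independent. -/
def Trivial : Prop := ∀ E : Set (Sym2 ℕ), IsGraph E → M.Indep E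

/-- `M` is unbounded: the sequence `r(K_n)` is unbounded. -/
def Unbounded : Prop := ∀ B : ℕ, ∃ n : ℕ, B < M.rk (cliqueN n)

/-- `M` is bounded: the sequence `r(K_n)` is bounded. -/
def Bounded : Prop := ∃ B : ℕ, ∀ n : ℕ, M.rk (cliqueN n) ≤ B

/-- For a bounded family, `m` is the rank `r(M)` of `M`: the maximum (limit) of the
monotone sequence `r(K_n)`. -/
def HasRank (m : ℕ) : Prop :=
  (∀ n : ℕ, M.rk (cliqueN n) ≤ m) ∧ ∃ n : ℕ, M.rk (cliqueN n) = m

/-- `d` is the dimensionality of (the nontrivial family) `M`: the least `d` such that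
there is an `M`-circuit with minimum degree `d + 1`. -/
def IsDimensionality (d : ℕ) : Prop :=
  IsLeast {d : ℕ | ∃ C, M.IsCircuit C ∧ minDeg C = d + 1} d

/-- `t` is the threshold of (the nontrivial family) `M` with dimensionality `d`:
the least value of `|V(C)| - 1` over all `M`-circuits `C` with minimum degree `d + 1`. -/
def IsThreshold (d t : ℕ) : Prop :=
  IsLeast {t : ℕ | ∃ C, M.IsCircuit C ∧ minDeg C = d + 1 ∧ (eSupp C).ncard = t + 1} t

/-- `M` has the Lovász–Yemini property. -/
def LovaszYemini : Prop :=
  ∃ c : ℕ, ∀ E : Set (Sym2 ℕ), IsGraph E → KConnected c E → M.Rigid E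

/-- `ψ` is an isomorphism between the matroids `M(G)` and `M(H)`. -/
def MatroidIso (G H : Set (Sym2 ℕ)) (ψ : Sym2 ℕ → Sym2 ℕ) : Prop :=
  Set.BijOn ψ G H ∧ ∀ S ⊆ G, (M.Indep S ↔ M.Indep (ψ '' S))

/-- `G` is `M`-reconstructible: every isomorphism between `M(G)` and `M(H)` (for a graph
`H` without isolated vertices) is induced by a graph isomorphism. -/
def Reconstructible (G : Set (Sym2 ℕ)) : Prop :=
  ∀ H : Set (Sym2 ℕ), IsGraph H → ∀ ψ : Sym2 ℕ → Sym2 ℕ, M.MatroidIso G H ψ →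
    ∃ φ : ℕ → ℕ, Set.BijOn φ (eSupp G) (eSupp H) ∧ ∀ e ∈ G, ψ e = Sym2.map φ e

/-- `M` has the Whitney property. -/
def Whitney : Prop :=
  ∃ c : ℕ, ∀ E : Set (Sym2 ℕ), IsGraph E → KConnected c E → M.Reconstructible E

/-- `M` is the union of the graph matroid families `Ms`. -/
def IsUnionOf {k : ℕ} (Ms : Fin k → GraphMatroidFamily) : Prop :=
  ∀ I : Set (Sym2 ℕ),
    M.Indep I ↔ ∃ Is : Fin k → Set (Sym2 ℕ), (∀ i, (Ms i).Indep (Is i)) ∧ I = ⋃ i, Is i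

/-- `M` is a family of `d`-dimensional abstract rigidity matroids. -/
def FamilyOfARM (d : ℕ) : Prop :=
  ∀ n : ℕ, d ≤ n → IsARM d {v : ℕ | v < n} (M.M.restrict (cliqueN n))

/-- `M` is `1`-extendable: its dimensionality `d` is finite and positive, and the
`d`-dimensional edge split operation preserves `M`-independence. -/
def OneExtendable : Prop :=
  ∃ d : ℕ, 0 < d ∧ M.IsDimensionality d ∧
    ∀ G G' : Set (Sym2 ℕ), IsGraph G → M.Indep G → EdgeSplit d G G' → M.Indep G'

/-- `G` is `k`-vertex-redundantly `M`-rigid. -/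
def VertexRedundantlyRigid (k : ℕ) (G : Set (Sym2 ℕ)) : Prop :=
  M.Rigid G ∧ ∀ S : Finset ℕ, ↑S ⊆ eSupp G → S.card ≤ k →
    M.RigidOn (eSupp G \ ↑S) (deleteVerts G ↑S)

end GraphMatroidFamily

/-! ### Auxiliary lemmas for the proof of `rank_linear` -/

open Set

section Aux

lemma aux_exists_perm_extend {S : Set ℕ} (hS : S.Finite) {f : ℕ → ℕ} (hf : Set.InjOn f S) :
    ∃ σ : Equiv.Perm ℕ, ∀ x ∈ S, σ x = f x := by
  classical
  have hT : (f '' S).Finite := hS.image f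
  let e : ↥S ≃ ↥(f '' S) := (hf.bijOn_image).equiv f
  haveI : Infinite ↥(Sᶜ) := Set.infinite_coe_iff.mpr hS.infinite_compl
  haveI : Infinite ↥((f '' S)ᶜ) := Set.infinite_coe_iff.mpr hT.infinite_compl
  obtain ⟨d1⟩ := nonempty_denumerable (↥(Sᶜ))
  obtain ⟨d2⟩ := nonempty_denumerable (↥((f '' S)ᶜ))
  have e' : ↥(Sᶜ) ≃ ↥((f '' S)ᶜ) := (d1.eqv _).trans (d2.eqv _).symm
  refine ⟨(Equiv.Set.sumCompl S).symm.trans ((e.sumCongr e').trans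
    (Equiv.Set.sumCompl (f '' S))), ?_⟩
  intro x hx
  simp only [Equiv.trans_apply]
  rw [Equiv.Set.sumCompl_symm_apply_of_mem hx]
  rw [Equiv.sumCongr_apply, Sum.map_inl, Equiv.Set.sumCompl_apply_inl]
  rfl

lemma aux_sym2_exists (e : Sym2 ℕ) : ∃ a b : ℕ, e = s(a, b) := by
  induction e using Sym2.ind with
  | _ a b => exact ⟨a, b, rfl⟩

lemma aux_sym2_coe_finite (e : Sym2 ℕ) : {v : ℕ | v ∈ e}.Finite := by
  induction e using Sym2.ind with
  | _ a b =>
    have h : {v : ℕ | v ∈ s(a, b)} ⊆ {a, b} := by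
      intro v hv
      rcases Sym2.mem_iff.mp hv with h | h <;> simp [h]
    exact ((Set.finite_singleton b).insert a).subset h

lemma aux_eSupp_finite {E : Set (Sym2 ℕ)} (hE : E.Finite) : (eSupp E).Finite := by
  have h : eSupp E ⊆ ⋃ e ∈ E, {v : ℕ | v ∈ e} := by
    rintro v ⟨e, he, hv⟩
    exact Set.mem_biUnion he hv
  exact (hE.biUnion fun e _ => aux_sym2_coe_finite e).subset h

lemma aux_eSupp_mem {E : Set (Sym2 ℕ)} {e : Sym2 ℕ} {v : ℕ} (he : e ∈ E) (hv : v ∈ e) :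
    v ∈ eSupp E := ⟨e, he, hv⟩

lemma aux_mem_cliqueN {n a b : ℕ} : s(a, b) ∈ cliqueN n ↔ a ≠ b ∧ a < n ∧ b < n := by
  constructor
  · rintro ⟨hnd, hlt⟩
    refine ⟨fun h => hnd (Sym2.mk_isDiag_iff.mpr h), hlt a (by simp), hlt b (by simp)⟩
  · rintro ⟨hab, ha, hb⟩
    refine ⟨fun h => hab (Sym2.mk_isDiag_iff.mp h), ?_⟩
    intro v hv
    rcases Sym2.mem_iff.mp hv with h | h <;> simp [h, ha, hb]

lemma aux_cliqueN_subset {m n : ℕ} (h : m ≤ n) : cliqueN m ⊆ cliqueN n := by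
  rintro e ⟨hnd, hlt⟩
  exact ⟨hnd, fun v hv => lt_of_lt_of_le (hlt v hv) h⟩

lemma aux_cliqueN_finite (n : ℕ) : (cliqueN n).Finite := by
  have h : cliqueN n ⊆ (fun p : ℕ × ℕ => s(p.1, p.2)) '' (Set.Iio n ×ˢ Set.Iio n) := by
    intro e he
    obtain ⟨a, b, rfl⟩ := aux_sym2_exists e
    rw [aux_mem_cliqueN] at he
    exact ⟨(a, b), ⟨he.2.1, he.2.2⟩, rfl⟩
  exact ((Set.finite_Iio n).prod (Set.finite_Iio n)).image _ |>.subset h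

lemma aux_cliqueN_mem_lt {n : ℕ} {e : Sym2 ℕ} (he : e ∈ cliqueN n) {v : ℕ} (hv : v ∈ e) :
    v < n := he.2 v hv

end Aux

section Mrk

variable {M₀ : Matroid (Sym2 ℕ)} {X Y : Set (Sym2 ℕ)}

lemma aux_mrk_isGreatest (hX : X.Finite) (hXE : X ⊆ M₀.E) :
    IsGreatest {n : ℕ | ∃ I ⊆ X, M₀.Indep I ∧ I.ncard = n} (mrk M₀ X) := by
  obtain ⟨I, hI⟩ := M₀.exists_isBasis X hXE
  have hgr : IsGreatest {n : ℕ | ∃ J ⊆ X, M₀.Indep J ∧ J.ncard = n} I.ncard := by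
    constructor
    · exact ⟨I, hI.subset, hI.indep, rfl⟩
    · rintro n ⟨J, hJX, hJ, rfl⟩
      obtain ⟨J', hJ', hJJ'⟩ := hJ.subset_isBasis_of_subset hJX hXE
      have henc := hJ'.encard_eq_encard hI
      have hJ'fin : J'.Finite := hX.subset hJ'.subset
      calc J.ncard ≤ J'.ncard := Set.ncard_le_ncard hJJ' hJ'fin
        _ = I.ncard := by rw [Set.ncard_def, henc, ← Set.ncard_def]
  have : mrk M₀ X = I.ncard := hgr.csSup_eq
  rw [this]
  exact hgr

lemma aux_le_mrk (hX : X.Finite) (hXE : X ⊆ M₀.E) {J : Set (Sym2 ℕ)} (hJX : J ⊆ X)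
    (hJ : M₀.Indep J) : J.ncard ≤ mrk M₀ X :=
  (aux_mrk_isGreatest hX hXE).2 ⟨J, hJX, hJ, rfl⟩

lemma aux_exists_basis_mrk (hX : X.Finite) (hXE : X ⊆ M₀.E) :
    ∃ I ⊆ X, M₀.Indep I ∧ I.ncard = mrk M₀ X ∧ X ⊆ M₀.closure I := by
  obtain ⟨I, hI⟩ := M₀.exists_isBasis X hXE
  have h1 : I.ncard ≤ mrk M₀ X := aux_le_mrk hX hXE hI.subset hI.indep
  have h2 : mrk M₀ X ≤ I.ncard := by
    obtain ⟨J, hJX, hJ, hJcard⟩ := (aux_mrk_isGreatest hX hXE).1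
    obtain ⟨J', hJ', hJJ'⟩ := hJ.subset_isBasis_of_subset hJX hXE
    have henc := hJ'.encard_eq_encard hI
    have hJ'fin : J'.Finite := hX.subset hJ'.subset
    calc mrk M₀ X = J.ncard := hJcard.symm
      _ ≤ J'.ncard := Set.ncard_le_ncard hJJ' hJ'fin
      _ = I.ncard := by rw [Set.ncard_def, henc, ← Set.ncard_def]
  exact ⟨I, hI.subset, hI.indep, le_antisymm h1 h2, hI.subset_closure⟩

lemma aux_mrk_le_of_subset_closure (hX : X.Finite) (hXE : X ⊆ M₀.E) (hY : Y.Finite)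
    (hYE : Y ⊆ M₀.E) (h : Y ⊆ M₀.closure X) : mrk M₀ Y ≤ mrk M₀ X := by
  obtain ⟨J, hJY, hJ, hJcard, -⟩ := aux_exists_basis_mrk hY hYE
  obtain ⟨I, hIX, hI, hIcard, -⟩ := aux_exists_basis_mrk hX hXE
  obtain ⟨I', hI'⟩ := M₀.exists_isBasis X hXE
  have hI'cl : M₀.IsBasis I' (M₀.closure X) := hI'.isBasis_closure_right
  obtain ⟨J', hJ', hJJ'⟩ := hJ.subset_isBasis_of_subset (hJY.trans h)
    (M₀.closure_subset_ground X)
  have henc : J'.encard = I'.encard := hJ'.encard_eq_encard hI'cl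
  have hI'fin : I'.Finite := hX.subset hI'.subset
  have hJ'fin : J'.Finite := by
    rw [← Set.encard_ne_top_iff] at hI'fin ⊢
    rwa [henc]
  have hI'rk : I'.ncard ≤ mrk M₀ X := aux_le_mrk hX hXE hI'.subset hI'.indep
  calc mrk M₀ Y = J.ncard := hJcard.symm
    _ ≤ J'.ncard := Set.ncard_le_ncard hJJ' hJ'fin
    _ = I'.ncard := by rw [Set.ncard_def, henc, ← Set.ncard_def]
    _ ≤ mrk M₀ X := hI'rk

end Mrk
section Deg

lemma aux_deg_eq {E : Set (Sym2 ℕ)} (hnd : ∀ e ∈ E, ¬ e.IsDiag) (u : ℕ) :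
    {x : ℕ | s(u, x) ∈ E}.ncard = deg E u := by
  have himg : (fun x => s(u, x)) '' {x : ℕ | s(u, x) ∈ E} = {e ∈ E | u ∈ e} := by
    ext e
    constructor
    · rintro ⟨x, hx, rfl⟩
      exact ⟨hx, by simp⟩
    · rintro ⟨he, hu⟩
      obtain ⟨a, b, rfl⟩ := aux_sym2_exists e
      rcases Sym2.mem_iff.mp hu with rfl | rfl
      · exact ⟨b, he, rfl⟩
      · refine ⟨a, ?_, Sym2.eq_swap⟩
        show s(u, a) ∈ E
        rwa [Sym2.eq_swap]
  have hinj : Set.InjOn (fun x => s(u, x)) {x : ℕ | s(u, x) ∈ E} := by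
    intro x hx y hy hxy
    simp only [Sym2.eq_iff] at hxy
    rcases hxy with ⟨-, h⟩ | ⟨h1, h2⟩
    · exact h
    · subst h1; subst h2
      exact absurd (Sym2.mk_isDiag_iff.mpr rfl) (hnd _ hy)
  rw [deg, ← himg, Set.ncard_image_of_injOn hinj]

lemma aux_deg_pos {E : Set (Sym2 ℕ)} (hE : E.Finite) {v : ℕ} (hv : v ∈ eSupp E) :
    1 ≤ deg E v := by
  obtain ⟨e, he, hve⟩ := hv
  have hne : {e ∈ E | v ∈ e}.Nonempty := ⟨e, he, hve⟩
  have hfin : {e ∈ E | v ∈ e}.Finite := hE.subset (Set.sep_subset _ _)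
  exact hne.ncard_pos hfin

lemma aux_minDeg_le {E : Set (Sym2 ℕ)} {v : ℕ} (hv : v ∈ eSupp E) : minDeg E ≤ deg E v :=
  Nat.sInf_le ⟨v, hv, rfl⟩

lemma aux_minDeg_attained {E : Set (Sym2 ℕ)} (hne : (eSupp E).Nonempty) :
    ∃ v ∈ eSupp E, deg E v = minDeg E := by
  obtain ⟨v, hv⟩ := hne
  have : minDeg E ∈ {k : ℕ | ∃ v ∈ eSupp E, deg E v = k} := Nat.sInf_mem ⟨deg E v, v, hv, rfl⟩
  obtain ⟨w, hw, hwd⟩ := this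
  exact ⟨w, hw, hwd⟩

end Deg

namespace GraphMatroidFamily

variable {M : GraphMatroidFamily}

lemma aux_indep_map_iff (σ : Equiv.Perm ℕ) (I : Set (Sym2 ℕ)) :
    M.M.Indep (Sym2.map σ '' I) ↔ M.M.Indep I := by
  refine ⟨fun h => ?_, fun h => M.invariant σ I h⟩
  have h2 := M.invariant σ⁻¹ _ h
  have h3 : Sym2.map ⇑σ⁻¹ '' (Sym2.map ⇑σ '' I) = I := by
    rw [← Set.image_comp]
    have : (Sym2.map ⇑σ⁻¹) ∘ (Sym2.map ⇑σ) = id := by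
      funext x
      simp only [Function.comp_apply, Sym2.map_map]
      have : (⇑σ⁻¹ ∘ ⇑σ) = id := by funext y; simp
      show Sym2.map (⇑σ⁻¹ ∘ ⇑σ) x = id x
      rw [this, Sym2.map_id]
    rw [this, Set.image_id]
  rwa [h3] at h2

lemma aux_ground_eq' : M.M.E = {e : Sym2 ℕ | ¬ e.IsDiag} := M.ground_eq

lemma aux_exists_circuit {X : Set (Sym2 ℕ)} (hX : X.Finite) (hXE : X ⊆ M.M.E)
    (hdep : ¬ M.M.Indep X) : ∃ C ⊆ X, M.IsCircuit C := by
  set P := {k : ℕ | ∃ C ⊆ X, ¬ M.M.Indep C ∧ C.ncard = k} with hP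
  have hne : P.Nonempty := ⟨X.ncard, X, Set.Subset.rfl, hdep, rfl⟩
  obtain ⟨C, hCX, hCdep, hCcard⟩ := Nat.sInf_mem hne
  have hCfin : C.Finite := hX.subset hCX
  refine ⟨C, hCX, ⟨hCfin, fun e he => ?_⟩, hCdep, ?_⟩
  · have := hXE (hCX he)
    rwa [M.ground_eq] at this
  · intro e he
    by_contra hdep'
    have hlt : (C \ {e}).ncard < C.ncard := Set.ncard_diff_singleton_lt_of_mem he hCfin
    have hmem : (C \ {e}).ncard ∈ P := ⟨C \ {e}, (Set.diff_subset).trans hCX, hdep', rfl⟩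
    have := Nat.sInf_le hmem
    omega

lemma aux_circuit_nonempty {C : Set (Sym2 ℕ)} (hC : M.IsCircuit C) : C.Nonempty := by
  rcases Set.eq_empty_or_nonempty C with rfl | h
  · exact absurd M.M.empty_indep hC.2.1
  · exact h

lemma aux_circuit_eSupp_nonempty {C : Set (Sym2 ℕ)} (hC : M.IsCircuit C) :
    (eSupp C).Nonempty := by
  obtain ⟨e, he⟩ := aux_circuit_nonempty hC
  obtain ⟨a, b, rfl⟩ := aux_sym2_exists e
  exact ⟨a, s(a, b), he, by simp⟩

lemma aux_circuit_minDeg {d : ℕ} (hd : M.IsDimensionality d) {C : Set (Sym2 ℕ)}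
    (hC : M.IsCircuit C) : d + 1 ≤ minDeg C := by
  obtain ⟨v, hv, hvd⟩ := aux_minDeg_attained (aux_circuit_eSupp_nonempty hC)
  have h1 : 1 ≤ minDeg C := hvd ▸ aux_deg_pos hC.1.1 hv
  have hmem : minDeg C - 1 ∈ {k : ℕ | ∃ C, M.IsCircuit C ∧ minDeg C = k + 1} :=
    ⟨C, hC, by omega⟩
  have := hd.2 hmem
  omega

end GraphMatroidFamily
namespace GraphMatroidFamily

variable {M : GraphMatroidFamily}

lemma aux_F_card {n d : ℕ} (hdn : d ≤ n) :
    ((fun i => s(n, i)) '' ↑(Finset.range d)).ncard = d := by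
  have hinj : Set.InjOn (fun i => s(n, i)) ↑(Finset.range d) := by
    intro i hi j hj hij
    simp only [Finset.coe_range, Set.mem_Iio] at hi hj
    simp only [Sym2.eq_iff] at hij
    rcases hij with ⟨-, h⟩ | ⟨h1, h2⟩
    · exact h
    · omega
  rw [Set.ncard_image_of_injOn hinj, Set.ncard_coe_finset, Finset.card_range]

lemma aux_F_subset_clique {n d : ℕ} (hdn : d ≤ n) :
    (fun i => s(n, i)) '' ↑(Finset.range d) ⊆ cliqueN (n + 1) := by
  rintro e ⟨i, hi, rfl⟩
  simp only [Finset.coe_range, Set.mem_Iio] at hi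
  exact aux_mem_cliqueN.mpr ⟨by omega, by omega, by omega⟩

lemma aux_ground (m : ℕ) : cliqueN m ⊆ M.M.E := fun e he => by
  rw [M.ground_eq]; exact he.1

lemma aux_step_ge {d : ℕ} (hd : M.IsDimensionality d) {n : ℕ} (hdn : d ≤ n) :
    M.rk (cliqueN n) + d ≤ M.rk (cliqueN (n + 1)) := by
  classical
  set F : Set (Sym2 ℕ) := (fun i => s(n, i)) '' ↑(Finset.range d) with hF
  have hFclique : F ⊆ cliqueN (n + 1) := aux_F_subset_clique hdn
  have hFfin : F.Finite := ((Finset.range d).finite_toSet).image _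
  obtain ⟨I, hIX, hIindep, hIcard, -⟩ :=
    aux_exists_basis_mrk (M₀ := M.M) (aux_cliqueN_finite n) (aux_ground n)
  have hIfin : I.Finite := (aux_cliqueN_finite n).subset hIX
  have hInotn : ∀ e ∈ I, n ∉ e := fun e he hn => lt_irrefl n (aux_cliqueN_mem_lt (hIX he) hn)
  have hFn : ∀ e ∈ F, n ∈ e := by rintro e ⟨i, hi, rfl⟩; simp
  have hindep : M.M.Indep (I ∪ F) := by
    by_contra hdep
    obtain ⟨C, hCsub, hCcirc⟩ := aux_exists_circuit (hIfin.union hFfin)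
      (Set.union_subset (hIX.trans (aux_ground n)) (hFclique.trans (aux_ground (n + 1)))) hdep
    have hCI : ¬ C ⊆ I := fun h => hCcirc.2.1 (hIindep.subset h)
    obtain ⟨e, heC, heI⟩ := Set.not_subset.mp hCI
    have heF : e ∈ F := (hCsub heC).resolve_left heI
    have hnsupp : n ∈ eSupp C := ⟨e, heC, hFn e heF⟩
    have hsubF : {f ∈ C | n ∈ f} ⊆ F := by
      rintro f ⟨hfC, hfn⟩
      rcases hCsub hfC with h | h
      · exact absurd hfn (hInotn f h)
      · exact h
    have hdeg : deg C n ≤ d := by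
      have h1 : {f ∈ C | n ∈ f}.ncard ≤ F.ncard := Set.ncard_le_ncard hsubF hFfin
      have h2 : F.ncard = d := aux_F_card hdn
      rw [h2] at h1
      exact h1
    have h3 := aux_circuit_minDeg hd hCcirc
    have h4 := aux_minDeg_le hnsupp
    omega
  have hdisj : Disjoint I F := Set.disjoint_left.mpr fun heI hF2 => by
    exact fun h => (hInotn _ hF2) (hFn _ h)
  have hcard : (I ∪ F).ncard = mrk M.M (cliqueN n) + d := by
    rw [Set.ncard_union_eq hdisj hIfin hFfin, hIcard, aux_F_card hdn]
  have hsub2 : I ∪ F ⊆ cliqueN (n + 1) :=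
    Set.union_subset (hIX.trans (aux_cliqueN_subset (by omega))) hFclique
  have hfinal := aux_le_mrk (aux_cliqueN_finite (n + 1)) (aux_ground (n + 1)) hsub2 hindep
  rw [hcard] at hfinal
  exact hfinal

lemma aux_d_lt_t {d t : ℕ} {C : Set (Sym2 ℕ)} (hC : M.IsCircuit C) (hmin : minDeg C = d + 1)
    (hsupp : (eSupp C).ncard = t + 1) : d + 1 ≤ t := by
  obtain ⟨u, hu, hud⟩ := aux_minDeg_attained (aux_circuit_eSupp_nonempty hC)
  set N := {x : ℕ | s(u, x) ∈ C} with hN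
  have hNcard : N.ncard = deg C u := aux_deg_eq hC.1.2 u
  have huN : u ∉ N := fun h => hC.1.2 _ h (Sym2.mk_isDiag_iff.mpr rfl)
  have hNsupp : N ⊆ eSupp C := fun x hx => ⟨s(u, x), hx, by simp⟩
  have hsubset : insert u N ⊆ eSupp C := Set.insert_subset hu hNsupp
  have hsuppfin : (eSupp C).Finite := aux_eSupp_finite hC.1.1
  have hNfin : N.Finite := hsuppfin.subset hNsupp
  have hle : (insert u N).ncard ≤ (eSupp C).ncard := Set.ncard_le_ncard hsubset hsuppfin
  rw [Set.ncard_insert_of_notMem huN hNfin, hNcard, hud, hmin, hsupp] at hle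
  omega

end GraphMatroidFamily
namespace GraphMatroidFamily

variable {M : GraphMatroidFamily}

lemma aux_step_le {d t : ℕ} {C : Set (Sym2 ℕ)} (hC : M.IsCircuit C) (hmin : minDeg C = d + 1)
    (hsupp : (eSupp C).ncard = t + 1) {n : ℕ} (htn : t ≤ n) :
    M.rk (cliqueN (n + 1)) ≤ M.rk (cliqueN n) + d := by
  classical
  have hdt : d + 1 ≤ t := aux_d_lt_t hC hmin hsupp
  set F : Set (Sym2 ℕ) := (fun i => s(n, i)) '' ↑(Finset.range d) with hFdef
  set X : Set (Sym2 ℕ) := cliqueN n ∪ F with hXdef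
  have hdn : d ≤ n := by omega
  have hFclique : F ⊆ cliqueN (n + 1) := aux_F_subset_clique hdn
  have hFfin : F.Finite := ((Finset.range d).finite_toSet).image _
  have hXfin : X.Finite := (aux_cliqueN_finite n).union hFfin
  have hXE : X ⊆ M.M.E :=
    Set.union_subset (aux_ground n) (hFclique.trans (aux_ground (n + 1)))
  -- set-up from the circuit C
  have hCfin : C.Finite := hC.1.1
  have hSfin : (eSupp C).Finite := aux_eSupp_finite hCfin
  obtain ⟨u, hu, hud⟩ := aux_minDeg_attained (aux_circuit_eSupp_nonempty hC)
  set N : Set ℕ := {x : ℕ | s(u, x) ∈ C} with hNdef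
  have hNcard : N.ncard = d + 1 := by rw [aux_deg_eq hC.1.2 u, hud, hmin]
  have huN : u ∉ N := fun h => hC.1.2 _ h (Sym2.mk_isDiag_iff.mpr rfl)
  have hNsupp : N ⊆ eSupp C := fun x hx => ⟨s(u, x), hx, by simp⟩
  have hNfin : N.Finite := hSfin.subset hNsupp
  set SF : Finset ℕ := hSfin.toFinset with hSFdef
  set NF : Finset ℕ := hNfin.toFinset with hNFdef
  have hNFcard : NF.card = d + 1 := by
    rw [← Set.ncard_eq_toFinset_card N hNfin, hNcard]
  have hSFcard : SF.card = t + 1 := by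
    rw [← Set.ncard_eq_toFinset_card _ hSfin, hsupp]
  have huNF : u ∉ NF := by rwa [hNFdef, Set.Finite.mem_toFinset]
  have hNFSF : NF ⊆ SF := by
    intro y hy
    rw [hSFdef, Set.Finite.mem_toFinset]
    exact hNsupp (by rwa [hNFdef, Set.Finite.mem_toFinset] at hy)
  have huSF : u ∈ SF := by rwa [hSFdef, Set.Finite.mem_toFinset]
  -- the key claim
  have key : ∀ x : ℕ, d ≤ x → x < n → s(n, x) ∈ M.M.closure X := by
    intro x hdx hxn
    set T : Finset ℕ := insert x (Finset.range d) with hTdef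
    have hxT : x ∉ Finset.range d := by simp; omega
    have hTcard : T.card = d + 1 := by rw [hTdef, Finset.card_insert_of_notMem hxT, Finset.card_range]
    have e₁ : ↥NF ≃ ↥T := Finset.equivOfCardEq (by rw [hNFcard, hTcard])
    set RF : Finset ℕ := SF \ insert u NF with hRFdef
    have hinsSF : insert u NF ⊆ SF := Finset.insert_subset huSF hNFSF
    have hRFcard : RF.card = t - d - 1 := by
      rw [hRFdef, Finset.card_sdiff_of_subset hinsSF, hSFcard, Finset.card_insert_of_notMem huNF, hNFcard]
      omega
    have hTsub : T ⊆ Finset.range n := by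
      intro z hz
      rcases Finset.mem_insert.mp hz with rfl | hz
      · simp; omega
      · simp at hz ⊢; omega
    set T2 : Finset ℕ := Finset.range n \ T with hT2def
    have hT2card : T2.card = n - (d + 1) := by
      rw [hT2def, Finset.card_sdiff_of_subset hTsub, Finset.card_range, hTcard]
    have hle : RF.card ≤ T2.card := by rw [hRFcard, hT2card]; omega
    obtain ⟨T2', hT2'sub, hT2'card⟩ := Finset.exists_subset_card_eq hle
    have e₂ : ↥RF ≃ ↥T2' := Finset.equivOfCardEq hT2'card.symm
    -- the vertex map
    set φ : ℕ → ℕ := fun y =>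
      if hy : y = u then n
      else if hy : y ∈ NF then (e₁ ⟨y, hy⟩ : ℕ)
      else if hy : y ∈ RF then (e₂ ⟨y, hy⟩ : ℕ) else y with hφdef
    have hφu : φ u = n := by simp [hφdef]
    have hφN : ∀ (y : ℕ) (hy : y ∈ NF), φ y = (e₁ ⟨y, hy⟩ : ℕ) := by
      intro y hy
      have hyu : ¬ y = u := fun h => huNF (h ▸ hy)
      simp [hφdef, hyu, hy]
    have hφR : ∀ (y : ℕ) (hy : y ∈ RF), φ y = (e₂ ⟨y, hy⟩ : ℕ) := by
      intro y hy
      have h1 : y ∉ insert u NF := (Finset.mem_sdiff.mp hy).2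
      have hyu : ¬ y = u := fun h => h1 (by simp [h])
      have hyN : y ∉ NF := fun h => h1 (Finset.mem_insert_of_mem h)
      simp [hφdef, hyu, hyN, hy]
    have hTlt : ∀ z ∈ T, z < n := fun z hz => Finset.mem_range.mp (hTsub hz)
    have hT2'lt : ∀ z ∈ T2', z < n := fun z hz =>
      Finset.mem_range.mp (Finset.mem_sdiff.mp (hT2'sub hz)).1
    have hT2'T : ∀ z ∈ T2', z ∉ T := fun z hz => (Finset.mem_sdiff.mp (hT2'sub hz)).2
    -- classification of values
    have hclass : ∀ y ∈ eSupp C, (y = u ∧ φ y = n) ∨ (∃ hy : y ∈ NF, φ y = (e₁ ⟨y, hy⟩ : ℕ))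
        ∨ (∃ hy : y ∈ RF, φ y = (e₂ ⟨y, hy⟩ : ℕ)) := by
      intro y hy
      by_cases h1 : y = u
      · exact Or.inl ⟨h1, h1 ▸ hφu⟩
      by_cases h2 : y ∈ NF
      · exact Or.inr (Or.inl ⟨h2, hφN y h2⟩)
      have h3 : y ∈ RF := by
        rw [hRFdef, Finset.mem_sdiff]
        refine ⟨by rwa [hSFdef, Set.Finite.mem_toFinset], ?_⟩
        intro hmem
        rcases Finset.mem_insert.mp hmem with h | h
        · exact h1 h
        · exact h2 h
      exact Or.inr (Or.inr ⟨h3, hφR y h3⟩)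
    have hinj : Set.InjOn φ (eSupp C) := by
      have hNlt : ∀ (y : ℕ) (hy : y ∈ NF), (e₁ ⟨y, hy⟩ : ℕ) < n :=
        fun y hy => hTlt _ (e₁ ⟨y, hy⟩).2
      have hRlt : ∀ (y : ℕ) (hy : y ∈ RF), (e₂ ⟨y, hy⟩ : ℕ) < n :=
        fun y hy => hT2'lt _ (e₂ ⟨y, hy⟩).2
      intro a ha b hb hab
      rcases hclass a ha with ⟨rfl, hva⟩ | ⟨haN, hva⟩ | ⟨haR, hva⟩ <;>
        rcases hclass b hb with ⟨rfl, hvb⟩ | ⟨hbN, hvb⟩ | ⟨hbR, hvb⟩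
      · rfl
      · rw [hva, hvb] at hab; have := hNlt b hbN; omega
      · rw [hva, hvb] at hab; have := hRlt b hbR; omega
      · rw [hva, hvb] at hab; have := hNlt a haN; omega
      · rw [hva, hvb] at hab
        have h : e₁ ⟨a, haN⟩ = e₁ ⟨b, hbN⟩ := Subtype.ext hab
        exact congrArg Subtype.val (e₁.injective h)
      · exfalso
        have h1 : (e₁ ⟨a, haN⟩ : ℕ) ∈ T := (e₁ ⟨a, haN⟩).2
        have h2 : (e₂ ⟨b, hbR⟩ : ℕ) ∉ T := hT2'T _ (e₂ ⟨b, hbR⟩).2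
        rw [hva, hvb] at hab
        apply h2
        rw [← hab]
        exact h1
      · rw [hva, hvb] at hab; have := hRlt a haR; omega
      · exfalso
        have h1 : (e₁ ⟨b, hbN⟩ : ℕ) ∈ T := (e₁ ⟨b, hbN⟩).2
        have h2 : (e₂ ⟨a, haR⟩ : ℕ) ∉ T := hT2'T _ (e₂ ⟨a, haR⟩).2
        rw [hva, hvb] at hab
        apply h2
        rw [hab]
        exact h1
      · rw [hva, hvb] at hab
        have h : e₂ ⟨a, haR⟩ = e₂ ⟨b, hbR⟩ := Subtype.ext hab
        exact congrArg Subtype.val (e₂.injective h)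
    -- extend to a permutation
    obtain ⟨σ, hσ⟩ := aux_exists_perm_extend hSfin hinj
    -- the distinguished neighbour mapping to x
    have hxT' : x ∈ T := Finset.mem_insert_self x _
    set y₀ : ℕ := (e₁.symm ⟨x, hxT'⟩ : ℕ) with hy₀def
    have hy₀NF : y₀ ∈ NF := (e₁.symm ⟨x, hxT'⟩).2
    have hy₀N : y₀ ∈ N := by rwa [hNFdef, Set.Finite.mem_toFinset] at hy₀NF
    have hy₀supp : y₀ ∈ eSupp C := hNsupp hy₀N
    have hφy₀ : φ y₀ = x := by
      rw [hφN y₀ hy₀NF]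
      have : (⟨y₀, hy₀NF⟩ : ↥NF) = e₁.symm ⟨x, hxT'⟩ := Subtype.ext rfl
      rw [this, Equiv.apply_symm_apply]
    have huy₀C : s(u, y₀) ∈ C := hy₀N
    -- the image of the circuit
    set C' : Set (Sym2 ℕ) := Sym2.map ⇑σ '' C with hC'def
    have hmapuy₀ : Sym2.map ⇑σ s(u, y₀) = s(n, x) := by
      rw [Sym2.map_pair_eq, hσ u hu, hσ y₀ hy₀supp, hφu, hφy₀]
    have hmemC' : s(n, x) ∈ C' := ⟨s(u, y₀), huy₀C, hmapuy₀⟩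
    have hnd : ∀ e ∈ C, ¬ e.IsDiag := hC.1.2
    -- C' is contained in X together with s(n,x)
    have hsubx : C' ⊆ X ∪ {s(n, x)} := by
      rintro _ ⟨e, he, rfl⟩
      obtain ⟨a, b, rfl⟩ := aux_sym2_exists e
      have hab : a ≠ b := fun h => hnd _ he (Sym2.mk_isDiag_iff.mpr h)
      have ha : a ∈ eSupp C := ⟨s(a, b), he, by simp⟩
      have hb : b ∈ eSupp C := ⟨s(a, b), he, by simp⟩
      rw [Sym2.map_pair_eq, hσ a ha, hσ b hb]
      have hedge1 : ∀ q : ℕ, s(u, q) ∈ C → s(n, φ q) ∈ X ∪ {s(n, x)} := by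
        intro q hqC
        have hqN : q ∈ NF := by
          rw [hNFdef, Set.Finite.mem_toFinset]
          exact hqC
        rw [hφN q hqN]
        have hmemT := (e₁ ⟨q, hqN⟩).2
        rcases Finset.mem_insert.mp hmemT with h | h
        · exact Or.inr (Set.mem_singleton_iff.mpr (congrArg (fun z => s(n, z)) h))
        · refine Or.inl (Or.inr ⟨(e₁ ⟨q, hqN⟩ : ℕ), ?_, rfl⟩)
          simpa using h
      have hlt : ∀ p : ℕ, p ∈ eSupp C → p ≠ u → φ p < n := by
        intro p hp hpu
        rcases hclass p hp with ⟨h, -⟩ | ⟨hN, hv⟩ | ⟨hR, hv⟩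
        · exact absurd h hpu
        · rw [hv]; exact hTlt _ (e₁ ⟨p, hN⟩).2
        · rw [hv]; exact hT2'lt _ (e₂ ⟨p, hR⟩).2
      by_cases hau : a = u
      · rw [hau] at he ⊢
        rw [hφu]
        exact hedge1 b he
      by_cases hbu : b = u
      · rw [hbu] at he ⊢
        rw [hφu]
        have he' : s(u, a) ∈ C := by rwa [Sym2.eq_swap] at he
        have := hedge1 a he'
        rwa [show s(φ a, n) = s(n, φ a) from Sym2.eq_swap]
      have hplt : φ a < n := hlt a ha hau
      have hqlt : φ b < n := hlt b hb hbu
      have hne : φ a ≠ φ b := fun h => hab (hinj ha hb h)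
      exact Or.inl (Or.inl (aux_mem_cliqueN.mpr ⟨hne, hplt, hqlt⟩))
    -- C' is dependent, C' minus the new edge is independent and inside X
    have hdepC' : ¬ M.M.Indep C' := fun h => hC.2.1 ((aux_indep_map_iff σ C).mp h)
    have hC'E : C' ⊆ M.M.E := by
      refine fun e he => ?_
      rcases hsubx he with h | h
      · exact hXE h
      · rw [h]
        rw [M.ground_eq]
        intro hdiag
        rw [Sym2.mk_isDiag_iff] at hdiag
        omega
    have hdiff : C' \ {s(n, x)} = Sym2.map ⇑σ '' (C \ {s(u, y₀)}) := by
      rw [Set.image_diff (Sym2.map.injective σ.injective), Set.image_singleton, hmapuy₀]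
    have hindepdiff : M.M.Indep (C' \ {s(n, x)}) := by
      rw [hdiff]
      exact M.invariant σ _ (hC.2.2 _ huy₀C)
    have hsubXdiff : C' \ {s(n, x)} ⊆ X := by
      rintro e ⟨he, hne⟩
      rcases hsubx he with h | h
      · exact h
      · exact absurd h hne
    have hclmem : s(n, x) ∈ M.M.closure (C' \ {s(n, x)}) := by
      rw [hindepdiff.mem_closure_iff]
      left
      rw [Matroid.dep_iff]
      constructor
      · rw [Set.insert_diff_singleton, Set.insert_eq_self.mpr hmemC']
        exact hdepC'
      · rw [Set.insert_diff_singleton, Set.insert_eq_self.mpr hmemC']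
        exact hC'E
    exact M.M.closure_subset_closure hsubXdiff hclmem
  -- every edge of K_(n+1) lies in the closure of X
  have hXcl : cliqueN (n + 1) ⊆ M.M.closure X := by
    intro e he
    obtain ⟨a, b, rfl⟩ := aux_sym2_exists e
    rw [aux_mem_cliqueN] at he
    obtain ⟨hab, han, hbn⟩ := he
    have hXsub : X ⊆ M.M.closure X := M.M.subset_closure X hXE
    by_cases ha : a < n
    · by_cases hb : b < n
      · exact hXsub (Or.inl (aux_mem_cliqueN.mpr ⟨hab, ha, hb⟩))
      · -- b = n
        have hbn' : b = n := by omega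
        rw [hbn', Sym2.eq_swap]
        by_cases had : a < d
        · exact hXsub (Or.inr ⟨a, by simpa using had, rfl⟩)
        · exact key a (by omega) ha
    · -- a = n
      have han' : a = n := by omega
      have hb : b < n := by omega
      rw [han']
      by_cases hbd : b < d
      · exact hXsub (Or.inr ⟨b, by simpa using hbd, rfl⟩)
      · exact key b (by omega) hb
  -- conclude
  have h6 : mrk M.M (cliqueN (n + 1)) ≤ mrk M.M X :=
    aux_mrk_le_of_subset_closure hXfin hXE (aux_cliqueN_finite (n + 1))
      (aux_ground (n + 1)) hXcl
  have h7 : mrk M.M X ≤ mrk M.M (cliqueN n) + d := by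
    obtain ⟨I, hIX, hIindep, hIcard, -⟩ := aux_exists_basis_mrk hXfin hXE
    have hIfin : I.Finite := hXfin.subset hIX
    have hIeq : I = (I ∩ cliqueN n) ∪ (I ∩ F) := by
      rw [← Set.inter_union_distrib_left]
      exact (Set.inter_eq_self_of_subset_left hIX).symm
    have h8 : I.ncard ≤ (I ∩ cliqueN n).ncard + (I ∩ F).ncard := by
      conv_lhs => rw [hIeq]
      exact Set.ncard_union_le _ _
    have h9 : (I ∩ cliqueN n).ncard ≤ mrk M.M (cliqueN n) :=
      aux_le_mrk (aux_cliqueN_finite n) (aux_ground n) Set.inter_subset_right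
        (hIindep.subset Set.inter_subset_left)
    have h10 : (I ∩ F).ncard ≤ d := by
      have := Set.ncard_le_ncard (Set.inter_subset_right (s := I) (t := F)) hFfin
      rwa [aux_F_card hdn] at this
    omega
  show mrk M.M (cliqueN (n + 1)) ≤ mrk M.M (cliqueN n) + d
  omega

end GraphMatroidFamily
/-- (Linearity of rank.) If `M` is a nontrivial graph matroid family
with rank function `r`, dimensionality `d`, and threshold `t`, then
`r(K_n) = d (n - t) + r(K_t)` for every `n ≥ t`. -/
theorem rank_linear (M : GraphMatroidFamily) (d t : ℕ)
    (hnt : ¬ M.Trivial) (hd : M.IsDimensionality d) (ht : M.IsThreshold d t) :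
    ∀ n : ℕ, t ≤ n → M.rk (cliqueN n) = d * (n - t) + M.rk (cliqueN t) := by
  obtain ⟨⟨C, hCcirc, hCmin, hCsupp⟩, -⟩ := ht
  have hdt : d + 1 ≤ t := GraphMatroidFamily.aux_d_lt_t hCcirc hCmin hCsupp
  have step : ∀ m : ℕ, t ≤ m → M.rk (cliqueN (m + 1)) = M.rk (cliqueN m) + d :=
    fun m hm => le_antisymm (GraphMatroidFamily.aux_step_le hCcirc hCmin hCsupp hm)
      (GraphMatroidFamily.aux_step_ge hd (by omega))
  have main : ∀ k : ℕ, M.rk (cliqueN (t + k)) = d * k + M.rk (cliqueN t) := by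
    intro k
    induction k with
    | zero => simp
    | succ k ih =>
      have h1 := step (t + k) (by omega)
      have h2 : t + (k + 1) = (t + k) + 1 := by omega
      rw [h2, h1, ih]
      ring
  intro n hn
  have h3 := main (n - t)
  rwa [show t + (n - t) = n by omega] at h3
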